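/- Let G be a simple graph with n vertices and m ≥ 1 edges, with no isolated vertices, and let p ≠ 0 be a real number. Then the p-Sombor energy satisfies S_pE(G) ≥ √( N_2³ / N_4 ), where N_2 = tr((S_p(G))^2) and N_4 = tr((S_p(G))^4). -/

import Mathlib

open Finset

/-- The `p`-Sombor matrix of a simple graph `G` on vertices `{0, …, n-1}`:
its `(i,j)` entry is `((d i)^p + (d j)^p)^(1/p)` when `i ~ j`, and `0` otherwise. -/
noncomputable def somborMatrix (n : ℕ) (G : SimpleGraph (Fin n)) [DecidableRel G.Adj]
    (p : ℝ) : Matrix (Fin n) (Fin n) ℝ :=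
  Matrix.of fun i j =>
    if G.Adj i j then ((G.degree i : ℝ) ^ p + (G.degree j : ℝ) ^ p) ^ (1 / p) else 0

/-- Sum of a symmetric weight `f` over the edges of `G`
(each unordered edge counted once). -/
noncomputable def edgeSum (n : ℕ) (G : SimpleGraph (Fin n)) [DecidableRel G.Adj]
    (f : Fin n → Fin n → ℝ) : ℝ :=
  (1 / 2) * ∑ i, ∑ j, if G.Adj i j then f i j else 0

/-- The `p`-Sombor index `SO_p(G) = ∑_{ij ∈ E(G)} ((d i)^p + (d j)^p)^(1/p)`. -/
noncomputable def somborIndex (n : ℕ) (G : SimpleGraph (Fin n)) [DecidableRel G.Adj]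
    (p : ℝ) : ℝ :=
  edgeSum n G fun i j => ((G.degree i : ℝ) ^ p + (G.degree j : ℝ) ^ p) ^ (1 / p)

/-- For a graph with `m ≥ 1` edges, the `p`-Sombor energy
`S_pE(G) = ∑ |ξ_i|` satisfies `S_pE(G) ≥ √(N₂³ / N₄)`, where `N_k = tr((S_p(G))^k)`. -/
lemma trace_pow_eq (n : ℕ) (A : Matrix (Fin n) (Fin n) ℝ) (hA : A.IsHermitian) (k : ℕ) :
    Matrix.trace (A ^ k) = ∑ i, hA.eigenvalues i ^ k := by
  set U := hA.eigenvectorUnitary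
  set D : Matrix (Fin n) (Fin n) ℝ := Matrix.diagonal (RCLike.ofReal ∘ hA.eigenvalues)
  have hU : star (U : Matrix (Fin n) (Fin n) ℝ) * U = 1 := Matrix.mem_unitaryGroup_iff'.mp U.2
  have hU' : (U : Matrix (Fin n) (Fin n) ℝ) * star (U : Matrix (Fin n) (Fin n) ℝ) = 1 :=
    Matrix.mem_unitaryGroup_iff.mp U.2
  have hpow : ∀ m : ℕ, ((U : Matrix (Fin n) (Fin n) ℝ) * D * star (U : Matrix (Fin n) (Fin n) ℝ)) ^ m
      = (U : Matrix (Fin n) (Fin n) ℝ) * D ^ m * star (U : Matrix (Fin n) (Fin n) ℝ) := by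
    intro m
    induction m with
    | zero => simp [hU']
    | succ m ih =>
      rw [pow_succ, ih, pow_succ]
      calc (U : Matrix (Fin n) (Fin n) ℝ) * D ^ m * star (U : Matrix (Fin n) (Fin n) ℝ) *
            ((U : Matrix (Fin n) (Fin n) ℝ) * D * star (U : Matrix (Fin n) (Fin n) ℝ))
          = (U : Matrix (Fin n) (Fin n) ℝ) * D ^ m *
            (star (U : Matrix (Fin n) (Fin n) ℝ) * (U : Matrix (Fin n) (Fin n) ℝ)) *
            (D * star (U : Matrix (Fin n) (Fin n) ℝ)) := by noncomm_ring
        _ = _ := by rw [hU]; noncomm_ring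
  conv_lhs => rw [hA.spectral_theorem, Unitary.conjStarAlgAut_apply]
  rw [hpow, Matrix.trace_mul_cycle, hU, one_mul]
  simp [D, Matrix.diagonal_pow, Matrix.trace_diagonal]

theorem somborEnergy_ge_sqrt (n : ℕ) (G : SimpleGraph (Fin n)) [DecidableRel G.Adj]
    (hdeg : ∀ i : Fin n, 0 < G.degree i) (hm : 1 ≤ G.edgeFinset.card)
    (p : ℝ) (hp : p ≠ 0) (hS : (somborMatrix n G p).IsHermitian) :
    Real.sqrt (Matrix.trace (somborMatrix n G p ^ 2) ^ 3 /
        Matrix.trace (somborMatrix n G p ^ 4)) ≤ ∑ i, |hS.eigenvalues i| := by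
  rw [trace_pow_eq n _ hS 2, trace_pow_eq n _ hS 4]
  set f := hS.eigenvalues with hf
  have hE0 : (0:ℝ) ≤ ∑ i, |f i| := Finset.sum_nonneg fun i _ => abs_nonneg _
  have hA2nn : (0:ℝ) ≤ ∑ i, f i ^ 2 := Finset.sum_nonneg fun i _ => sq_nonneg _
  have hA4nn : (0:ℝ) ≤ ∑ i, f i ^ 4 := Finset.sum_nonneg fun i _ => by positivity
  have hA3nn : (0:ℝ) ≤ ∑ i, |f i| ^ 3 := Finset.sum_nonneg fun i _ => by positivity
  have cs1 : (∑ i, f i ^ 2) ^ 2 ≤ (∑ i, |f i|) * ∑ i, |f i| ^ 3 := by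
    have h := Finset.sum_mul_sq_le_sq_mul_sq Finset.univ
      (fun i => Real.sqrt |f i|) (fun i => |f i| * Real.sqrt |f i|)
    have e1 : ∀ i : Fin n, Real.sqrt |f i| * (|f i| * Real.sqrt |f i|) = f i ^ 2 := by
      intro i
      have hs := Real.mul_self_sqrt (abs_nonneg (f i))
      calc Real.sqrt |f i| * (|f i| * Real.sqrt |f i|)
          = (Real.sqrt |f i| * Real.sqrt |f i|) * |f i| := by ring
        _ = |f i| * |f i| := by rw [hs]
        _ = f i ^ 2 := by rw [← sq_abs]; ring
    have e2 : ∀ i : Fin n, (Real.sqrt |f i|) ^ 2 = |f i| := fun i =>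
      Real.sq_sqrt (abs_nonneg _)
    have e3 : ∀ i : Fin n, (|f i| * Real.sqrt |f i|) ^ 2 = |f i| ^ 3 := by
      intro i
      have hs := Real.mul_self_sqrt (abs_nonneg (f i))
      calc (|f i| * Real.sqrt |f i|) ^ 2
          = |f i| ^ 2 * (Real.sqrt |f i| * Real.sqrt |f i|) := by ring
        _ = |f i| ^ 2 * |f i| := by rw [hs]
        _ = |f i| ^ 3 := by ring
    simpa only [e1, e2, e3] using h
  have cs2 : (∑ i, |f i| ^ 3) ^ 2 ≤ (∑ i, f i ^ 2) * ∑ i, f i ^ 4 := by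
    have h := Finset.sum_mul_sq_le_sq_mul_sq Finset.univ
      (fun i => |f i|) (fun i => f i ^ 2)
    have e1 : ∀ i : Fin n, |f i| * f i ^ 2 = |f i| ^ 3 := by
      intro i; rw [← sq_abs]; ring
    have e2 : ∀ i : Fin n, (f i ^ 2) ^ 2 = f i ^ 4 := fun i => by ring
    have e3 : ∀ i : Fin n, |f i| ^ 2 = f i ^ 2 := fun i => sq_abs _
    simpa only [e1, e2, e3] using h
  by_cases hA4 : (∑ i, f i ^ 4) = 0
  · have hall : ∀ i ∈ Finset.univ, f i ^ 4 = (0:ℝ) :=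
      (Finset.sum_eq_zero_iff_of_nonneg (fun i _ => by positivity)).mp hA4
    have hA2 : ∑ i, f i ^ 2 = 0 := Finset.sum_eq_zero fun i hi => by
      have h4 := hall i hi
      have : f i = 0 := pow_eq_zero_iff (n := 4) (by norm_num) |>.mp h4
      simp [this]
    rw [hA2, hA4]
    simpa using hE0
  · have hA4pos : 0 < ∑ i, f i ^ 4 := lt_of_le_of_ne hA4nn (Ne.symm hA4)
    have key : (∑ i, f i ^ 2) ^ 3 ≤ (∑ i, |f i|) ^ 2 * ∑ i, f i ^ 4 := by
      rcases eq_or_lt_of_le hA2nn with hA2 | hA2pos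
      · rw [← hA2]; norm_num; positivity
      · have h1 : ((∑ i, f i ^ 2) ^ 2) ^ 2 ≤ ((∑ i, |f i|) * ∑ i, |f i| ^ 3) ^ 2 :=
          pow_le_pow_left₀ (sq_nonneg _) cs1 2
        have h2 : ((∑ i, |f i|) * ∑ i, |f i| ^ 3) ^ 2
            = (∑ i, |f i|) ^ 2 * (∑ i, |f i| ^ 3) ^ 2 := by ring
        have h3 : (∑ i, |f i|) ^ 2 * (∑ i, |f i| ^ 3) ^ 2
            ≤ (∑ i, |f i|) ^ 2 * ((∑ i, f i ^ 2) * ∑ i, f i ^ 4) :=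
          mul_le_mul_of_nonneg_left cs2 (sq_nonneg _)
        have h4 : (∑ i, f i ^ 2) * (∑ i, f i ^ 2) ^ 3
            ≤ (∑ i, f i ^ 2) * ((∑ i, |f i|) ^ 2 * ∑ i, f i ^ 4) := by nlinarith
        exact le_of_mul_le_mul_left h4 hA2pos
    have hdiv : (∑ i, f i ^ 2) ^ 3 / (∑ i, f i ^ 4) ≤ (∑ i, |f i|) ^ 2 :=
      (div_le_iff₀ hA4pos).mpr key
    calc Real.sqrt ((∑ i, f i ^ 2) ^ 3 / ∑ i, f i ^ 4)
        ≤ Real.sqrt ((∑ i, |f i|) ^ 2) := Real.sqrt_le_sqrt hdiv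
      _ = ∑ i, |f i| := Real.sqrt_sq hE0
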